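/- Let f : ℝ^d → ℝ be continuously differentiable and L-smooth with a nonempty set S of global minimizers, minimal value f⋆, ∅ ≠ S̃ ⊆ S, and suppose there exist c₁ > 0, c₂ ≥ 0 with ⟨∇f(x), x − proj_{S̃}(x)⟩ ≥ c₁ (f(x) − f⋆) − c₂ for all x. Let l⋆ ≤ f⋆ and run x^{k+1} = x^k − γ^k ∇f(x^k) with γ^k = c₁ (f(x^k) − l⋆)/‖∇f(x^k)‖². Then for every K ≥ 0: min_{0≤k≤K} (f(x^k) − f⋆) ≤ 2L ‖x^0 − x^0_p‖²/(c₁² (K+1)) + σ² + 2c₂/c₁, where σ² := f⋆ − l⋆ and x^0_p := proj_{S̃}(x^0). -/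

import Mathlib

open scoped RealInnerProductSpace

variable {E : Type*} [NormedAddCommGroup E] [InnerProductSpace ℝ E] [CompleteSpace E]

lemma line_hasDerivAt (f : E → ℝ) (hf : ContDiff ℝ 1 f) (x v : E) (t : ℝ) :
    HasDerivAt (fun s : ℝ => f (x + s • v)) ⟪gradient f (x + t • v), v⟫ t := by
  have hdf : DifferentiableAt ℝ f (x + t • v) := (hf.differentiable one_ne_zero).differentiableAt
  have h2 : HasFDerivAt f ((InnerProductSpace.toDual ℝ E) (gradient f (x + t • v))) (x + t • v) :=
    hasGradientAt_iff_hasFDerivAt.mp hdf.hasGradientAt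
  have h3 : HasDerivAt (fun s : ℝ => x + s • v) v t := by
    simpa using ((hasDerivAt_id t).smul_const v).const_add x
  exact h2.comp_hasDerivAt t h3

lemma grad_cont (f : E → ℝ) (L : ℝ) (hL : 0 ≤ L)
    (hsmooth : ∀ y z, ‖gradient f y - gradient f z‖ ≤ L * ‖y - z‖) :
    Continuous (gradient f) := by
  have : LipschitzWith (Real.toNNReal L) (gradient f) := by
    apply LipschitzWith.of_dist_le_mul
    intro y z
    rw [dist_eq_norm, dist_eq_norm]
    calc ‖gradient f y - gradient f z‖ ≤ L * ‖y - z‖ := hsmooth y z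
    _ = (Real.toNNReal L) * ‖y - z‖ := by rw [Real.coe_toNNReal L hL]
  exact this.continuous

lemma descent_lemma (f : E → ℝ) (hf : ContDiff ℝ 1 f) (L : ℝ) (hL : 0 ≤ L)
    (hsmooth : ∀ y z, ‖gradient f y - gradient f z‖ ≤ L * ‖y - z‖) (x y : E) :
    f y ≤ f x + ⟪gradient f x, y - x⟫ + L / 2 * ‖y - x‖ ^ 2 := by
  set v := y - x with hv
  have hcont : Continuous fun t : ℝ => ⟪gradient f (x + t • v), v⟫ := by
    apply Continuous.inner
    · exact (grad_cont f L hL hsmooth).comp (by continuity)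
    · exact continuous_const
  have key : f y - f x = ∫ t in (0:ℝ)..1, ⟪gradient f (x + t • v), v⟫ := by
    rw [intervalIntegral.integral_eq_sub_of_hasDerivAt
      (fun t _ => line_hasDerivAt f hf x v t) (hcont.intervalIntegrable 0 1)]
    simp [hv]
  have hmono : (∫ t in (0:ℝ)..1, ⟪gradient f (x + t • v), v⟫) ≤
      ∫ t in (0:ℝ)..1, (⟪gradient f x, v⟫ + L * ‖v‖ ^ 2 * t) := by
    apply intervalIntegral.integral_mono_on (by norm_num)
      (hcont.intervalIntegrable 0 1) (by apply Continuous.intervalIntegrable; continuity)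
    intro t ht
    obtain ⟨ht0, ht1⟩ := ht
    have h1 : ⟪gradient f (x + t • v), v⟫ = ⟪gradient f x, v⟫ +
        ⟪gradient f (x + t • v) - gradient f x, v⟫ := by
      rw [inner_sub_left]; ring
    rw [h1]
    have h2 : ⟪gradient f (x + t • v) - gradient f x, v⟫ ≤ L * ‖v‖ ^ 2 * t := by
      calc ⟪gradient f (x + t • v) - gradient f x, v⟫
          ≤ ‖gradient f (x + t • v) - gradient f x‖ * ‖v‖ := real_inner_le_norm _ _
        _ ≤ (L * ‖x + t • v - x‖) * ‖v‖ := by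
            gcongr; exact hsmooth _ _
        _ = L * ‖v‖ ^ 2 * t := by
            rw [show x + t • v - x = t • v by abel, norm_smul]
            simp [abs_of_nonneg ht0]; ring
    linarith
  have hval : (∫ t in (0:ℝ)..1, (⟪gradient f x, v⟫ + L * ‖v‖ ^ 2 * t)) =
      ⟪gradient f x, v⟫ + L / 2 * ‖v‖ ^ 2 := by
    rw [intervalIntegral.integral_add intervalIntegrable_const
      ((show Continuous fun t : ℝ => L * ‖v‖ ^ 2 * t from continuous_const.mul continuous_id').intervalIntegrable 0 1), intervalIntegral.integral_const_mul,
      integral_id, intervalIntegral.integral_const]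
    norm_num
    ring
  linarith [key ▸ hmono.trans_eq hval]

lemma grad_sq_le (f : E → ℝ) (hf : ContDiff ℝ 1 f) (L : ℝ) (hL : 0 < L)
    (hsmooth : ∀ y z, ‖gradient f y - gradient f z‖ ≤ L * ‖y - z‖) (fstar : ℝ)
    (hmin : ∀ y, fstar ≤ f y) (x : E) : ‖gradient f x‖ ^ 2 ≤ 2 * L * (f x - fstar) := by
  have h := descent_lemma f hf L hL.le hsmooth x (x - L⁻¹ • gradient f x)
  have h1 : x - L⁻¹ • gradient f x - x = -(L⁻¹ • gradient f x) := by abel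
  rw [h1] at h
  have h2 : ⟪gradient f x, -(L⁻¹ • gradient f x)⟫ = -(L⁻¹ * ‖gradient f x‖ ^ 2) := by
    rw [inner_neg_right, real_inner_smul_right, real_inner_self_eq_norm_sq]
  have h3 : ‖-(L⁻¹ • gradient f x)‖ ^ 2 = L⁻¹ ^ 2 * ‖gradient f x‖ ^ 2 := by
    rw [norm_neg, norm_smul]
    rw [mul_pow, Real.norm_eq_abs, sq_abs]
  rw [h2, h3] at h
  have h4 := hmin (x - L⁻¹ • gradient f x)
  have hL' : L ≠ 0 := hL.ne'
  have h5 : L⁻¹ * ‖gradient f x‖ ^ 2 - L / 2 * (L⁻¹ ^ 2 * ‖gradient f x‖ ^ 2) ≤ f x - fstar := by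
    linarith
  have h6 : L⁻¹ * ‖gradient f x‖ ^ 2 - L / 2 * (L⁻¹ ^ 2 * ‖gradient f x‖ ^ 2)
      = ‖gradient f x‖ ^ 2 / (2 * L) := by
    field_simp
    ring
  rw [h6, div_le_iff₀ (by positivity)] at h5
  linarith

set_option maxHeartbeats 1000000 in
/-- Polyak-type stepsize with a lower bound `l⋆ ≤ f⋆` (Table 2, second row):
under the unified parametric assumption with `P(x) = f(x) − f⋆` and `L`-smoothness,
gradient descent with `γᵏ = c₁(f(xᵏ) − l⋆)/‖∇f(xᵏ)‖²` achieves an `O(1/K)` rate up to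
the neighborhood `σ² + 2c₂/c₁`, where `σ² = f⋆ − l⋆`. -/
theorem polyak_stepsize_lower_bound_rate
    {d : ℕ} (f : EuclideanSpace ℝ (Fin d) → ℝ)
    (hf : ContDiff ℝ 1 f)
    (L : ℝ) (hL : 0 < L)
    (hsmooth : ∀ y z, ‖gradient f y - gradient f z‖ ≤ L * ‖y - z‖)
    (S St : Set (EuclideanSpace ℝ (Fin d)))
    (hSne : S.Nonempty)
    (hSmin : ∀ s ∈ S, ∀ y, f s ≤ f y)
    (fstar : ℝ) (hfstar : ∀ s ∈ S, f s = fstar)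
    (hStS : St ⊆ S) (hStne : St.Nonempty)
    (proj : EuclideanSpace ℝ (Fin d) → EuclideanSpace ℝ (Fin d))
    (hproj : ∀ y, proj y ∈ St ∧ ∀ z ∈ St, ‖y - proj y‖ ≤ ‖y - z‖)
    (c₁ c₂ : ℝ) (hc₁ : 0 < c₁) (hc₂ : 0 ≤ c₂)
    (hass : ∀ y, c₁ * (f y - fstar) - c₂ ≤ ⟪gradient f y, y - proj y⟫)
    (lstar : ℝ) (hlstar : lstar ≤ fstar)
    (x : ℕ → EuclideanSpace ℝ (Fin d)) (γ : ℕ → ℝ)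
    (hupd : ∀ k, x (k + 1) = x k - γ k • gradient f (x k))
    (hγ : ∀ k, γ k = c₁ * (f (x k) - lstar) / ‖gradient f (x k)‖ ^ 2)
    (K : ℕ) :
    (Finset.range (K + 1)).inf' ⟨0, Finset.mem_range.mpr (Nat.succ_pos K)⟩ (fun k => f (x k) - fstar) ≤
      2 * L * ‖x 0 - proj (x 0)‖ ^ 2 / (c₁ ^ 2 * (K + 1)) + (fstar - lstar)
      + 2 * c₂ / c₁ := by
  have hmin : ∀ y, fstar ≤ f y := by
    intro y
    obtain ⟨s, hs⟩ := hSne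
    rw [← hfstar s hs]
    exact hSmin s hs y
  have hσ : 0 ≤ fstar - lstar := by linarith
  set r0 : ℝ := ‖x 0 - proj (x 0)‖ ^ 2 with hr0def
  set E : ℝ := 2 * L * r0 / (c₁ ^ 2 * (K + 1)) with hEdef
  by_contra hcon
  push_neg at hcon
  have hlt : ∀ k, k ≤ K → E + (fstar - lstar) + 2 * c₂ / c₁ < f (x k) - fstar := by
    intro k hk
    exact hcon.trans_le (Finset.inf'_le _ (Finset.mem_range.mpr (by omega)))
  have hr0nn : (0:ℝ) ≤ r0 := by positivity
  have hKpos : (0:ℝ) < (K:ℝ) + 1 := by positivity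
  rcases eq_or_lt_of_le hr0nn with hr0 | hr0
  · -- r0 = 0 : x 0 is already a minimizer, contradiction with hlt 0
    have hx0 : x 0 = proj (x 0) := by
      have hn : ‖x 0 - proj (x 0)‖ = 0 := by
        have := hr0.symm
        nlinarith [norm_nonneg (x 0 - proj (x 0))]
      exact sub_eq_zero.mp (norm_eq_zero.mp hn)
    have hfx0 : f (x 0) = fstar := by
      rw [hx0]; exact hfstar _ (hStS (hproj (x 0)).1)
    have h0 := hlt 0 (Nat.zero_le K)
    rw [hfx0] at h0
    have hE0 : E = 0 := by rw [hEdef, ← hr0]; ring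
    rw [hE0] at h0
    have : 0 ≤ 2 * c₂ / c₁ := by positivity
    linarith
  · -- main case
    have hE : 0 < E := by positivity
    set D : ℝ := r0 / ((K:ℝ) + 1) with hDdef
    have hDE : c₁ / (2 * L) * (c₁ * E) = D := by
      rw [hEdef, hDdef]
      field_simp
    -- one-step strict decrease
    have step : ∀ k, k ≤ K →
        ‖x (k+1) - proj (x (k+1))‖ ^ 2 < ‖x k - proj (x k)‖ ^ 2 - D := by
      intro k hk
      set g : EuclideanSpace ℝ (Fin d) := gradient f (x k) with hg
      set p : EuclideanSpace ℝ (Fin d) := proj (x k) with hp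
      set Δ : ℝ := f (x k) - fstar with hΔdef
      set σ2 : ℝ := fstar - lstar with hσ2
      have hltk : E + σ2 + 2 * c₂ / c₁ < Δ := hlt k hk
      have hc2div : 0 ≤ 2 * c₂ / c₁ := by positivity
      have hΔpos : 0 < Δ := by linarith
      have hgne : g ≠ 0 := by
        intro h0
        have h1 := hass (x k)
        rw [← hg, h0] at h1
        simp only [inner_zero_left] at h1
        -- c₁ * Δ - c₂ ≤ 0
        have h2 : c₁ * (2 * c₂ / c₁) = 2 * c₂ := by field_simp
        nlinarith [mul_lt_mul_of_pos_left hltk hc₁]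
      have hg2pos : (0:ℝ) < ‖g‖ ^ 2 := pow_pos (norm_pos_iff.mpr hgne) 2
      have hg2le : ‖g‖ ^ 2 ≤ 2 * L * Δ :=
        grad_sq_le f hf L hL hsmooth fstar hmin (x k)
      have hγk : γ k = c₁ * (Δ + σ2) / ‖g‖ ^ 2 := by
        rw [hγ k, ← hg]
        congr 1
        rw [hΔdef, hσ2]
        ring
      have hγpos : 0 < γ k := by
        rw [hγk]
        exact div_pos (mul_pos hc₁ (by linarith)) hg2pos
      -- expansion of the squared distance
      have hsub : x (k+1) - p = (x k - p) - γ k • g := by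
        rw [hupd k, ← hg]; abel
      have hexp : ‖x (k+1) - p‖ ^ 2 =
          ‖x k - p‖ ^ 2 - 2 * (γ k * ⟪g, x k - p⟫) + γ k ^ 2 * ‖g‖ ^ 2 := by
        rw [hsub, norm_sub_sq_real, real_inner_smul_right, norm_smul, mul_pow,
          Real.norm_eq_abs, sq_abs, real_inner_comm]
      -- projection property
      have hprojle : ‖x (k+1) - proj (x (k+1))‖ ^ 2 ≤ ‖x (k+1) - p‖ ^ 2 := by
        have h1 := (hproj (x (k+1))).2 p ((hproj (x k)).1)
        exact pow_le_pow_left₀ (norm_nonneg _) h1 2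
      -- inner product bound
      have hinner : c₁ * Δ - c₂ ≤ ⟪g, x k - p⟫ := hass (x k)
      -- γ k * ‖g‖^2 = c₁ * (Δ + σ2)
      have hγg : γ k * ‖g‖ ^ 2 = c₁ * (Δ + σ2) := by
        rw [hγk]; field_simp
      set T : ℝ := c₁ * Δ - 2 * c₂ - c₁ * σ2 with hT
      have hTlb : c₁ * E < T := by
        have h2 : c₁ * (2 * c₂ / c₁) = 2 * c₂ := by field_simp
        nlinarith [mul_lt_mul_of_pos_left hltk hc₁]
      have hTpos : 0 < T := lt_trans (by positivity) hTlb
      have hmid : ‖x (k+1) - p‖ ^ 2 ≤ ‖x k - p‖ ^ 2 - γ k * T := by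
        rw [hexp]
        have h1 : γ k * (c₁ * Δ - c₂) ≤ γ k * ⟪g, x k - p⟫ :=
          mul_le_mul_of_nonneg_left hinner hγpos.le
        have h2 : γ k ^ 2 * ‖g‖ ^ 2 = γ k * (c₁ * (Δ + σ2)) := by
          rw [← hγg]; ring
        rw [h2, hT]
        nlinarith [h1]
      have hγlb : c₁ / (2 * L) ≤ γ k := by
        rw [hγk, div_le_div_iff₀ (by positivity) hg2pos]
        nlinarith [mul_le_mul_of_nonneg_left hg2le hc₁.le,
          mul_nonneg (mul_nonneg hc₁.le hσ) hL.le]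
      have hγT : D < γ k * T := by
        calc D = c₁ / (2 * L) * (c₁ * E) := hDE.symm
          _ < c₁ / (2 * L) * T := by
              apply mul_lt_mul_of_pos_left hTlb (by positivity)
          _ ≤ γ k * T := mul_le_mul_of_nonneg_right hγlb hTpos.le
      calc ‖x (k+1) - proj (x (k+1))‖ ^ 2 ≤ ‖x (k+1) - p‖ ^ 2 := hprojle
        _ ≤ ‖x k - p‖ ^ 2 - γ k * T := hmid
        _ < ‖x k - p‖ ^ 2 - D := by linarith
    -- telescoping
    have claim : ∀ k, k ≤ K → ‖x k - proj (x k)‖ ^ 2 ≤ r0 - (k:ℝ) * D := by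
      intro k
      induction k with
      | zero => intro _; simp [hr0def]
      | succ n ih =>
        intro hn
        have h1 := step n (by omega)
        have h2 := ih (by omega)
        push_cast
        linarith
    have h1 := step K le_rfl
    have h2 := claim K le_rfl
    have h3 : r0 - (K:ℝ) * D - D = 0 := by
      rw [hDdef]
      field_simp
      ring
    have h4 : (0:ℝ) ≤ ‖x (K+1) - proj (x (K+1))‖ ^ 2 := by positivity
    linarith
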